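/- arXiv:1810.08585 — 2 statements merged into one kernel-verified Lean document; each statement's English description precedes it below -/
import Mathlib

section
/- For a distributive meet-semilattice A, the complete lattice Up(X(A)) of upsets of the poset of irreducible filters of A, with the embedding β, is a canonical extension of A: β is a semilattice embedding, the extension is dense (each upset is the union of the closed elements below it and the intersection of the open elements above it) and compact. -/
namespace DS

variable {A : Type*} [SemilatticeInf A] [OrderTop A]

/-- A filter: an upset containing the top element, closed under meets. -/
def IsFilt (F : Set A) : Prop :=
  IsUpperSet F ∧ ⊤ ∈ F ∧ ∀ ⦃a b : A⦄, a ∈ F → b ∈ F → a ⊓ b ∈ F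

/-- An irreducible (prime) filter: a proper filter that is meet-irreducible
among filters. -/
def IsIrred (F : Set A) : Prop :=
  IsFilt F ∧ F ≠ Set.univ ∧
    ∀ F₁ F₂ : Set A, IsFilt F₁ → IsFilt F₂ → F = F₁ ∩ F₂ → F = F₁ ∨ F = F₂

/-- An order ideal: a downset in which every pair of elements has an upper
bound in the set. -/
def IsOrdIdeal (I : Set A) : Prop :=
  IsLowerSet I ∧ ∀ a ∈ I, ∀ b ∈ I, ∃ c ∈ I, a ≤ c ∧ b ≤ c

/-- Distributivity for a meet-semilattice with top. -/
def IsDistrib (A : Type*) [SemilatticeInf A] [OrderTop A] : Prop :=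
  ∀ a b c : A, a ⊓ b ≤ c → ∃ a₁ b₁ : A, a ≤ a₁ ∧ b ≤ b₁ ∧ c = a₁ ⊓ b₁

/-- The set of irreducible filters of `A`, ordered by inclusion. -/
def Spec (A : Type*) [SemilatticeInf A] [OrderTop A] : Type _ :=
  {P : Set A // IsIrred P}

instance : PartialOrder (Spec A) := Subtype.partialOrder _

/-- `beta a` = the set of irreducible filters containing `a`. -/
def beta (a : A) : Set (Spec A) := {P : Spec A | a ∈ P.1}

/-- The topology on `Spec A` generated by the basis `{beta aᶜ : a ∈ A}`. -/
def specTop (A : Type*) [SemilatticeInf A] [OrderTop A] : TopologicalSpace (Spec A) :=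
  TopologicalSpace.generateFrom {s : Set (Spec A) | ∃ a : A, s = (beta a)ᶜ}

/-- Special basic saturated subsets: intersections of dually directed families
of basic opens `beta aᶜ`. -/
def SBS (Z : Set (Spec A)) : Prop :=
  ∃ L : Set A, (∀ a ∈ L, ∀ b ∈ L, ∃ c ∈ L, beta a ∪ beta b ⊆ beta c) ∧
    Z = ⋂ a ∈ L, (beta a)ᶜ

/-- The order ideal associated to a special basic saturated set. -/
def IA (Z : Set (Spec A)) : Set A := {a : A | beta a ∩ Z = ∅}

/-- The special basic saturated set associated to an order ideal. -/
def alphaI (I : Set A) : Set (Spec A) := {P : Spec A | P.1 ∩ I = ∅}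

/-- The filter associated to a closed set. -/
def FY (Y : Set (Spec A)) : Set A := {a : A | Y ⊆ beta a}

/-- The multirelation `R_m` on the dual space. -/
def Rm (m : A → A) (P : Spec A) (Z : Set (Spec A)) : Prop :=
  {a : A | m a ∈ P.1} ∩ IA Z = ∅

/-- The multirelation `G_m` on the dual space. -/
def Gm (m : A → A) (P : Spec A) (Y : Set (Spec A)) : Prop :=
  FY Y ⊆ {a : A | m a ∈ P.1}

/-- The composed relation `R_m²`. -/
def Rm2 (m : A → A) (P : Spec A) (Z : Set (Spec A)) : Prop :=
  ∃ S : Set (Spec A), SBS S ∧ Rm m P S ∧ ∀ x ∈ S, Rm m x Z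

lemma gen_filt {P : Set A} (hP : IsFilt P) (a : A) :
    IsFilt {x | ∃ p ∈ P, p ⊓ a ≤ x} := by
  refine ⟨fun x y hxy ⟨p, hp, h⟩ => ⟨p, hp, h.trans hxy⟩, ⟨⊤, hP.2.1, le_top⟩,
    fun x y ⟨p, hp, h1⟩ ⟨q, hq, h2⟩ => ⟨p ⊓ q, hP.2.2 hp hq, ?_⟩⟩
  exact le_inf ((inf_le_inf_right a inf_le_left).trans h1)
    ((inf_le_inf_right a inf_le_right).trans h2)

/-- Separation lemma: a filter disjoint from a nonempty order ideal extends to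
an irreducible filter disjoint from it. -/
lemma sep (hA : IsDistrib A) {F I : Set A} (hF : IsFilt F) (hI : IsOrdIdeal I)
    (hne : I.Nonempty) (hdisj : ∀ x ∈ F, x ∉ I) :
    ∃ P : Set A, IsIrred P ∧ F ⊆ P ∧ ∀ x ∈ P, x ∉ I := by
  obtain ⟨P, hFP, hPS, hmax⟩ :
      ∃ P, F ⊆ P ∧ Maximal (· ∈ {G : Set A | IsFilt G ∧ ∀ x ∈ G, x ∉ I}) P := by
    refine zorn_subset_nonempty _ (fun c hcS hc hcne => ?_) F ⟨hF, hdisj⟩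
    refine ⟨⋃₀ c, ⟨⟨fun x y hxy hx => ?_, ?_, fun x y hx hy => ?_⟩, ?_⟩,
      fun s hs => Set.subset_sUnion_of_mem hs⟩
    · obtain ⟨G, hG, hxG⟩ := hx
      exact ⟨G, hG, (hcS hG).1.1 hxy hxG⟩
    · obtain ⟨G, hG⟩ := hcne
      exact ⟨G, hG, (hcS hG).1.2.1⟩
    · obtain ⟨G, hG, hxG⟩ := hx
      obtain ⟨G', hG', hyG⟩ := hy
      rcases hc.total hG hG' with h | h
      · exact ⟨G', hG', (hcS hG').1.2.2 (h hxG) hyG⟩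
      · exact ⟨G, hG, (hcS hG).1.2.2 hxG (h hyG)⟩
    · rintro x ⟨G, hG, hxG⟩
      exact (hcS hG).2 x hxG
  have hPfilt := hPS.1
  have hPdisj := hPS.2
  have hmax2 := hmax
  refine ⟨P, ⟨hPfilt, ?_, ?_⟩, hFP, hPdisj⟩
  · intro h
    obtain ⟨i, hi⟩ := hne
    exact hPdisj i (h ▸ Set.mem_univ i) hi
  · intro F₁ F₂ hF₁ hF₂ hPeq
    by_contra hcon
    push_neg at hcon
    obtain ⟨hne₁, hne₂⟩ := hcon
    have hsub₁ : P ⊆ F₁ := hPeq ▸ Set.inter_subset_left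
    have hsub₂ : P ⊆ F₂ := hPeq ▸ Set.inter_subset_right
    obtain ⟨a, haF₁, haP⟩ : ∃ a, a ∈ F₁ ∧ a ∉ P := by
      by_contra h
      push_neg at h
      exact hne₁ (Set.Subset.antisymm hsub₁ h)
    obtain ⟨b, hbF₂, hbP⟩ : ∃ b, b ∈ F₂ ∧ b ∉ P := by
      by_contra h
      push_neg at h
      exact hne₂ (Set.Subset.antisymm hsub₂ h)
    -- the filter generated by P and a must meet I
    have key : ∀ x : A, x ∉ P → ∃ i ∈ I, ∃ p ∈ P, p ⊓ x ≤ i := by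
      intro x hx
      by_contra h
      push_neg at h
      have hG : {z | ∃ p ∈ P, p ⊓ x ≤ z} ∈ {G : Set A | IsFilt G ∧ ∀ y ∈ G, y ∉ I} := by
        refine ⟨gen_filt hPfilt x, fun y ⟨p, hp, hle⟩ hyI => h y hyI p hp hle⟩
      have := hmax2 hG (fun p hp => ⟨p, hp, inf_le_left⟩)
      exact hx (this ⟨⊤, hPfilt.2.1, by simp⟩)
    obtain ⟨i₁, hi₁, p, hp, hp1⟩ := key a haP
    obtain ⟨i₂, hi₂, q, hq, hq2⟩ := key b hbP
    obtain ⟨i, hiI, h1i, h2i⟩ := hI.2 i₁ hi₁ i₂ hi₂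
    have hr : p ⊓ q ∈ P := hPfilt.2.2 hp hq
    have hra : (p ⊓ q) ⊓ a ≤ i := ((inf_le_inf_right a inf_le_left).trans hp1).trans h1i
    have hrb : (p ⊓ q) ⊓ b ≤ i := ((inf_le_inf_right b inf_le_right).trans hq2).trans h2i
    obtain ⟨r₁, a₁, hr₁, ha₁, hieq⟩ := hA (p ⊓ q) a i hra
    have hrba : (p ⊓ q) ⊓ b ≤ a₁ := hrb.trans (hieq.le.trans inf_le_right)
    obtain ⟨r₂, b₁, hr₂, hb₁, ha₁eq⟩ := hA (p ⊓ q) b a₁ hrba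
    have hb₁F₁ : b₁ ∈ F₁ := hF₁.1 ((ha₁.trans ha₁eq.le).trans inf_le_right) haF₁
    have hb₁F₂ : b₁ ∈ F₂ := hF₂.1 hb₁ hbF₂
    have hb₁P : b₁ ∈ P := hPeq ▸ ⟨hb₁F₁, hb₁F₂⟩
    have hiP : i ∈ P := by
      rw [hieq, ha₁eq]
      exact hPfilt.2.2 (hPfilt.1 hr₁ hr) (hPfilt.2.2 (hPfilt.1 hr₂ hr) hb₁P)
    exact hPdisj i hiP hiI

/-- The complement of an irreducible filter is updirected. -/
lemma compl_directed (hA : IsDistrib A) {P : Set A} (hP : IsIrred P) {a b : A}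
    (ha : a ∉ P) (hb : b ∉ P) : ∃ c, c ∉ P ∧ a ≤ c ∧ b ≤ c := by
  obtain ⟨hPfilt, -, hirr⟩ := hP
  have hsub₁ : P ⊆ {z | ∃ p ∈ P, p ⊓ a ≤ z} := fun p hp => ⟨p, hp, inf_le_left⟩
  have hsub₂ : P ⊆ {z | ∃ p ∈ P, p ⊓ b ≤ z} := fun p hp => ⟨p, hp, inf_le_left⟩
  have hne : P ≠ {z | ∃ p ∈ P, p ⊓ a ≤ z} ∩ {z | ∃ p ∈ P, p ⊓ b ≤ z} := by
    intro h
    rcases hirr _ _ (gen_filt hPfilt a) (gen_filt hPfilt b) h with h1 | h2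
    · exact ha (h1 ▸ ⟨⊤, hPfilt.2.1, by simp⟩)
    · exact hb (h2 ▸ ⟨⊤, hPfilt.2.1, by simp⟩)
  obtain ⟨x, hxG, hxP⟩ : ∃ x, (x ∈ {z | ∃ p ∈ P, p ⊓ a ≤ z} ∩ {z | ∃ p ∈ P, p ⊓ b ≤ z}) ∧ x ∉ P := by
    by_contra h
    push_neg at h
    exact hne (Set.Subset.antisymm (Set.subset_inter hsub₁ hsub₂) h)
  obtain ⟨⟨p, hp, hp1⟩, ⟨q, hq, hq1⟩⟩ := hxG
  have hra : (p ⊓ q) ⊓ a ≤ x := (inf_le_inf_right a inf_le_left).trans hp1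
  have hrb : (p ⊓ q) ⊓ b ≤ x := (inf_le_inf_right b inf_le_right).trans hq1
  obtain ⟨r₁, a₁, hr₁, ha₁, hxeq⟩ := hA (p ⊓ q) a x hra
  have hrba : (p ⊓ q) ⊓ b ≤ a₁ := hrb.trans (hxeq.le.trans inf_le_right)
  obtain ⟨r₂, b₁, hr₂, hb₁, ha₁eq⟩ := hA (p ⊓ q) b a₁ hrba
  have hr : p ⊓ q ∈ P := hPfilt.2.2 hp hq
  refine ⟨b₁, fun hb₁P => hxP ?_, (ha₁.trans ha₁eq.le).trans inf_le_right, hb₁⟩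
  rw [hxeq, ha₁eq]
  exact hPfilt.2.2 (hPfilt.1 hr₁ hr) (hPfilt.2.2 (hPfilt.1 hr₂ hr) hb₁P)


end DS

open DS Set

theorem stmt6 {A : Type*} [SemilatticeInf A] [OrderTop A] (hA : IsDistrib A) :
    -- β is a semilattice embedding into the complete lattice of upsets
    (Function.Injective (beta : A → Set (Spec A)) ∧
     (∀ a b : A, beta (a ⊓ b) = beta a ∩ beta b) ∧
     beta (⊤ : A) = (Set.univ : Set (Spec A)) ∧
     (∀ a : A, IsUpperSet (beta a))) ∧
    -- density: every upset is the union of the closed elements below it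
    (∀ U : Set (Spec A), IsUpperSet U →
      U = ⋃₀ {C : Set (Spec A) |
        (∃ F : Set A, IsFilt F ∧ C = ⋂ a ∈ F, beta a) ∧ C ⊆ U}) ∧
    -- density: every upset is the intersection of the open elements above it
    (∀ U : Set (Spec A), IsUpperSet U →
      U = ⋂₀ {O : Set (Spec A) |
        (∃ I : Set A, IsOrdIdeal I ∧ O = ⋃ a ∈ I, beta a) ∧ U ⊆ O}) ∧
    -- compactness
    (∀ D U : Set A, D.Nonempty → U.Nonempty →
      (∀ a ∈ D, ∀ b ∈ D, ∃ c ∈ D, c ≤ a ∧ c ≤ b) →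
      (∀ a ∈ U, ∀ b ∈ U, ∃ c ∈ U, a ≤ c ∧ b ≤ c) →
      (⋂ a ∈ D, beta a) ⊆ ⋃ a ∈ U, beta a →
      ∃ x ∈ D, ∃ y ∈ U, x ≤ y) := by
  have beta_le : ∀ a b : A, beta (a : A) ⊆ beta b → a ≤ b := by
    intro a b h
    by_contra hab
    obtain ⟨P, hP, haP, hdisj⟩ := DS.sep hA (F := {x : A | a ≤ x}) (I := {x : A | x ≤ b})
      ⟨fun x y hxy hx => hx.trans hxy, le_top, fun x y hx hy => le_inf hx hy⟩
      ⟨fun x y hyx hx => hyx.trans hx, fun x hx y hy => ⟨b, le_refl b, hx, hy⟩⟩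
      ⟨b, le_refl b⟩ (fun x hx hxb => hab (hx.trans hxb))
    exact hdisj b (h (show (⟨P, hP⟩ : Spec A) ∈ beta a from haP (le_refl a))) (le_refl b)
  refine ⟨⟨?_, ?_, ?_, ?_⟩, ?_, ?_, ?_⟩
  · -- injectivity
    intro a b hab
    exact le_antisymm (beta_le a b hab.le) (beta_le b a hab.ge)
  · -- meets
    intro a b
    ext P
    exact ⟨fun h => ⟨P.2.1.1 inf_le_left h, P.2.1.1 inf_le_right h⟩,
      fun h => P.2.1.2.2 h.1 h.2⟩
  · -- top
    exact Set.eq_univ_of_forall fun P => P.2.1.2.1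
  · -- upper sets
    intro a P Q hPQ haP
    exact hPQ haP
  · -- density via closed elements
    intro U hU
    apply Set.Subset.antisymm
    · intro P hP
      refine ⟨⋂ a ∈ P.1, beta a, ⟨⟨P.1, P.2.1, rfl⟩, ?_⟩, ?_⟩
      · intro Q hQ
        exact hU (show P ≤ Q from fun a ha => Set.mem_iInter₂.mp hQ a ha) hP
      · exact Set.mem_iInter₂.mpr fun a ha => ha
    · rintro P ⟨C, ⟨-, hCU⟩, hPC⟩
      exact hCU hPC
  · -- density via open elements
    intro U hU
    apply Set.Subset.antisymm
    · exact fun P hP O hO => hO.2 hP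
    · intro P hP
      by_contra hPU
      have hI : IsOrdIdeal ((P.1)ᶜ : Set A) :=
        ⟨P.2.1.1.compl, fun a ha b hb => compl_directed hA P.2 ha hb⟩
      have hO : (⋃ a ∈ (P.1)ᶜ, beta a) ∈ {O : Set (Spec A) |
          (∃ I : Set A, IsOrdIdeal I ∧ O = ⋃ a ∈ I, beta a) ∧ U ⊆ O} := by
        refine ⟨⟨(P.1)ᶜ, hI, rfl⟩, fun Q hQ => ?_⟩
        have hns : ¬ Q.1 ⊆ P.1 := fun h => hPU (hU (show Q ≤ P from h) hQ)
        obtain ⟨a, haQ, haP⟩ := Set.not_subset.mp hns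
        exact Set.mem_biUnion haP haQ
      obtain ⟨a, haP, haPm⟩ := Set.mem_iUnion₂.mp (hP _ hO)
      exact haP haPm
  · -- compactness
    intro D Uu hDne hUne hDdir hUdir hsub
    by_contra hcon
    push_neg at hcon
    have hF : IsFilt {z : A | ∃ x ∈ D, x ≤ z} := by
      refine ⟨fun x y hxy ⟨d, hd, h⟩ => ⟨d, hd, h.trans hxy⟩,
        hDne.elim fun d hd => ⟨d, hd, le_top⟩, fun x y hx hy => ?_⟩
      obtain ⟨d, hd, h1⟩ := hx
      obtain ⟨e, he, h2⟩ := hy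
      obtain ⟨c, hc, h3, h4⟩ := hDdir d hd e he
      exact ⟨c, hc, le_inf (h3.trans h1) (h4.trans h2)⟩
    have hI : IsOrdIdeal {z : A | ∃ y ∈ Uu, z ≤ y} := by
      refine ⟨fun x y hyx ⟨u, hu, h⟩ => ⟨u, hu, hyx.trans h⟩, fun a ha b hb => ?_⟩
      obtain ⟨u, hu, h1⟩ := ha
      obtain ⟨v, hv, h2⟩ := hb
      obtain ⟨c, hc, h3, h4⟩ := hUdir u hu v hv
      exact ⟨c, ⟨c, hc, le_refl c⟩, h1.trans h3, h2.trans h4⟩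
    obtain ⟨P, hP, hFP, hdisj⟩ := DS.sep hA hF hI
      (hUne.elim fun u hu => ⟨u, u, hu, le_refl u⟩)
      (fun z hz hzI => by
        obtain ⟨x, hx, h1⟩ := hz
        obtain ⟨y, hy, h2⟩ := hzI
        exact hcon x hx y hy (h1.trans h2))
    have hPmem : (⟨P, hP⟩ : Spec A) ∈ ⋂ a ∈ D, beta a :=
      Set.mem_iInter₂.mpr fun a ha => hFP ⟨a, ha, le_refl a⟩
    obtain ⟨y, hy, hyP⟩ := Set.mem_iUnion₂.mp (hsub hPmem)
    exact hdisj y hyP ⟨y, hy, le_refl y⟩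
end

section
/- Let ⟨A,m⟩ be a monotonic distributive semilattice. Then m²a ≤ ma for all a ∈ A if and only if the relation R_m is weakly dense, i.e., (P,Z) ∈ R_m implies (P,Z) ∈ R_m² for all irreducible filters P and all Z ∈ S(X(A)). -/
open DS Set


section Aux

variable {A : Type*} [SemilatticeInf A] [OrderTop A]

lemma isFilt_Ici (a : A) : IsFilt (Set.Ici a) :=
  ⟨fun _ _ hxy hx => le_trans hx hxy, le_top, fun _ _ hx hy => le_inf hx hy⟩

/-- Separation: an irreducible filter extending `F` and avoiding the directed
nonempty set `I`. -/
lemma sep (hA : IsDistrib A) {F I : Set A} (hF : IsFilt F)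
    (hdir : ∀ a ∈ I, ∀ b ∈ I, ∃ c ∈ I, a ≤ c ∧ b ≤ c)
    (hne : I.Nonempty) (hdisj : ∀ x ∈ F, x ∉ I) :
    ∃ P : Set A, IsIrred P ∧ F ⊆ P ∧ ∀ x ∈ P, x ∉ I := by
  set 𝒮 : Set (Set A) := {G | IsFilt G ∧ F ⊆ G ∧ ∀ x ∈ G, x ∉ I} with h𝒮
  have hchain : ∀ c ⊆ 𝒮, IsChain (· ⊆ ·) c → c.Nonempty → ∃ ub ∈ 𝒮, ∀ s ∈ c, s ⊆ ub := by
    intro c hc hchain ⟨G₀, hG₀⟩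
    refine ⟨⋃₀ c, ⟨⟨?_, ?_, ?_⟩, ?_, ?_⟩, fun s hs => subset_sUnion_of_mem hs⟩
    · intro x y hxy hx
      obtain ⟨G, hG, hxG⟩ := hx
      exact ⟨G, hG, (hc hG).1.1 hxy hxG⟩
    · exact ⟨G₀, hG₀, (hc hG₀).1.2.1⟩
    · intro x y hx hy
      obtain ⟨G₁, hG₁, hxG⟩ := hx
      obtain ⟨G₂, hG₂, hyG⟩ := hy
      rcases hchain.total hG₁ hG₂ with h12 | h21
      · exact ⟨G₂, hG₂, (hc hG₂).1.2.2 (h12 hxG) hyG⟩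
      · exact ⟨G₁, hG₁, (hc hG₁).1.2.2 hxG (h21 hyG)⟩
    · exact (hc hG₀).2.1.trans (subset_sUnion_of_mem hG₀)
    · rintro x ⟨G, hG, hxG⟩
      exact (hc hG).2.2 x hxG
  obtain ⟨P, hFP, hPmax⟩ := zorn_subset_nonempty 𝒮 hchain F ⟨hF, subset_rfl, hdisj⟩
  obtain ⟨hPfilt, hFP', hPdisj⟩ := hPmax.prop
  refine ⟨P, ⟨hPfilt, ?_, ?_⟩, hFP, hPdisj⟩
  · intro hPuniv
    obtain ⟨i, hi⟩ := hne
    exact hPdisj i (hPuniv ▸ Set.mem_univ i) hi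
  · intro F₁ F₂ hF₁ hF₂ hPeq
    by_contra hcon
    push_neg at hcon
    obtain ⟨hne₁, hne₂⟩ := hcon
    have hPsub₁ : P ⊆ F₁ := hPeq ▸ Set.inter_subset_left
    have hPsub₂ : P ⊆ F₂ := hPeq ▸ Set.inter_subset_right
    obtain ⟨a₁, ha₁F, ha₁P⟩ : ∃ a, a ∈ F₁ ∧ a ∉ P := by
      by_contra hc; push_neg at hc
      exact hne₁ (Set.Subset.antisymm hPsub₁ hc)
    obtain ⟨a₂, ha₂F, ha₂P⟩ : ∃ a, a ∈ F₂ ∧ a ∉ P := by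
      by_contra hc; push_neg at hc
      exact hne₂ (Set.Subset.antisymm hPsub₂ hc)
    -- the filter generated by P and aᵢ must meet I
    have key : ∀ a : A, a ∉ P → ∃ d ∈ I, ∃ p ∈ P, p ⊓ a ≤ d := by
      intro a haP
      set G : Set A := {x | ∃ p ∈ P, p ⊓ a ≤ x} with hG
      have hGfilt : IsFilt G := by
        refine ⟨?_, ⟨⊤, hPfilt.2.1, le_top⟩, ?_⟩
        · rintro x y hxy ⟨p, hp, hpx⟩
          exact ⟨p, hp, hpx.trans hxy⟩
        · rintro x y ⟨p, hp, hpx⟩ ⟨q, hq, hqy⟩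
          refine ⟨p ⊓ q, hPfilt.2.2 hp hq, le_inf ?_ ?_⟩
          · exact le_trans (inf_le_inf_right a inf_le_left) hpx
          · exact le_trans (inf_le_inf_right a inf_le_right) hqy
      have hPG : P ⊆ G := fun p hp => ⟨p, hp, inf_le_left⟩
      have haG : a ∈ G := ⟨⊤, hPfilt.2.1, by simp⟩
      have hGnot : G ∉ 𝒮 := by
        intro hG𝒮
        have := hPmax.2 hG𝒮 hPG
        exact haP (this haG)
      simp only [h𝒮, Set.mem_setOf_eq, not_and, not_forall] at hGnot
      obtain ⟨d, hdG, hdI⟩ := hGnot hGfilt (hFP'.trans hPG)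
      rw [not_not] at hdI
      obtain ⟨p, hp, hpd⟩ := hdG
      exact ⟨d, hdI, p, hp, hpd⟩
    obtain ⟨d₁, hd₁I, p₁, hp₁, hpd₁⟩ := key a₁ ha₁P
    obtain ⟨d₂, hd₂I, p₂, hp₂, hpd₂⟩ := key a₂ ha₂P
    obtain ⟨d, hdI, hd₁, hd₂⟩ := hdir d₁ hd₁I d₂ hd₂I
    have hle₁ : (p₁ ⊓ p₂) ⊓ a₁ ≤ d :=
      le_trans (inf_le_inf_right a₁ inf_le_left) (hpd₁.trans hd₁)
    have hle₂ : (p₁ ⊓ p₂) ⊓ a₂ ≤ d :=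
      le_trans (inf_le_inf_right a₂ inf_le_right) (hpd₂.trans hd₂)
    obtain ⟨u₁, v₁, hu₁, hv₁, hd₁eq⟩ := hA _ _ _ hle₁
    obtain ⟨u₂, v₂, hu₂, hv₂, hd₂eq⟩ := hA _ _ _ hle₂
    have hpP : p₁ ⊓ p₂ ∈ P := hPfilt.2.2 hp₁ hp₂
    have hdF₁ : d ∈ F₁ := by
      rw [hd₁eq]
      exact hF₁.2.2 (hF₁.1 hu₁ (hPsub₁ hpP)) (hF₁.1 hv₁ ha₁F)
    have hdF₂ : d ∈ F₂ := by
      rw [hd₂eq]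
      exact hF₂.2.2 (hF₂.1 hu₂ (hPsub₂ hpP)) (hF₂.1 hv₂ ha₂F)
    have hdP : d ∈ P := hPeq ▸ ⟨hdF₁, hdF₂⟩
    exact hPdisj d hdP hdI

lemma beta_mono {a b : A} (h : a ≤ b) : beta a ⊆ beta b :=
  fun P hP => P.2.1.1 h hP

lemma beta_reflect (hA : IsDistrib A) {a b : A} (h : beta a ⊆ beta b) : a ≤ b := by
  by_contra hab
  obtain ⟨P, hPirr, haP, hPd⟩ := sep (I := Set.Iic b) hA (isFilt_Ici a)
    (fun x hx y hy => ⟨b, le_refl b, hx, hy⟩) ⟨b, le_refl b⟩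
    (fun x hx hxb => hab (le_trans (Set.mem_Ici.mp hx) (Set.mem_Iic.mp hxb)))
  exact hPd b (h (show (⟨P, hPirr⟩ : Spec A) ∈ beta a from haP (le_refl a))) (le_refl b)

lemma le_of_beta_empty (hA : IsDistrib A) {a : A} (h : beta a = ∅) (b : A) : a ≤ b := by
  by_contra hab
  obtain ⟨P, hPirr, haP, _⟩ := sep (I := Set.Iic b) hA (isFilt_Ici a)
    (fun x hx y hy => ⟨b, le_refl b, hx, hy⟩) ⟨b, le_refl b⟩
    (fun x hx hxb => hab (le_trans (Set.mem_Ici.mp hx) (Set.mem_Iic.mp hxb)))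
  have : (⟨P, hPirr⟩ : Spec A) ∈ beta a := haP (le_refl a)
  rw [h] at this
  exact this

end Aux

theorem stmt17 {A : Type*} [SemilatticeInf A] [OrderTop A] (hA : IsDistrib A)
    (m : A → A) (hm : ∀ a b : A, a ≤ b → m a ≤ m b) :
    (∀ a : A, m (m a) ≤ m a) ↔
      ∀ P : Spec A, ∀ Z : Set (Spec A), SBS Z → Rm m P Z → Rm2 m P Z := by
  constructor
  · -- (⇒) m² ≤ m implies weak density
    intro h P Z hZ hR
    obtain ⟨L, hLdir, hZeq⟩ := hZ
    have hR' : ∀ a : A, m a ∈ P.1 → a ∉ IA Z := by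
      intro a ha haI
      have : a ∈ ({a | m a ∈ P.1} ∩ IA Z : Set A) := ⟨ha, haI⟩
      rw [show ({a | m a ∈ P.1} ∩ IA Z : Set A) = ∅ from hR] at this
      exact this
    by_cases hI : (IA Z : Set A).Nonempty
    · -- main case: IA Z nonempty
      have hIdir : ∀ a ∈ IA Z, ∀ b ∈ IA Z, ∃ c ∈ IA Z, a ≤ c ∧ b ≤ c := by
        rcases Set.eq_empty_or_nonempty L with hL | hL
        · -- L empty: every element of IA Z has empty beta, hence is bottom
          intro a ha b hb
          refine ⟨b, hb, ?_, le_refl b⟩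
          have hZuniv : Z = Set.univ := by rw [hZeq, hL]; simp
          have hbe : beta a = ∅ := by
            have h1 : beta a ∩ Z = ∅ := ha
            rwa [hZuniv, Set.inter_univ] at h1
          exact le_of_beta_empty hA hbe b
        · -- L nonempty: compactness
          have hLdir' : ∀ l₁ ∈ L, ∀ l₂ ∈ L, ∃ l₃ ∈ L, l₁ ≤ l₃ ∧ l₂ ≤ l₃ := by
            intro l₁ h₁ l₂ h₂
            obtain ⟨c, hc, hsub⟩ := hLdir l₁ h₁ l₂ h₂
            exact ⟨c, hc, beta_reflect hA (Set.subset_union_left.trans hsub),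
              beta_reflect hA (Set.subset_union_right.trans hsub)⟩
          have hcomp : ∀ d ∈ IA Z, ∃ l ∈ L, d ≤ l := by
            intro d hd
            by_contra hc; push_neg at hc
            obtain ⟨P', hP'irr, hdP', hP'disj⟩ := sep (I := {x | ∃ l ∈ L, x ≤ l})
              hA (isFilt_Ici d)
              (by
                rintro x ⟨l₁, hl₁, hx⟩ y ⟨l₂, hl₂, hy⟩
                obtain ⟨l₃, hl₃, h13, h23⟩ := hLdir' l₁ hl₁ l₂ hl₂
                exact ⟨l₃, ⟨l₃, hl₃, le_refl _⟩, hx.trans h13, hy.trans h23⟩)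
              (hL.imp fun l hl => ⟨l, hl, le_refl _⟩)
              (by
                rintro x hx ⟨l, hl, hxl⟩
                exact hc l hl ((Set.mem_Ici.mp hx).trans hxl))
            have hPZ : (⟨P', hP'irr⟩ : Spec A) ∈ Z := by
              rw [hZeq]
              refine Set.mem_iInter₂.mpr fun l hl hPl => ?_
              exact hP'disj l hPl ⟨l, hl, le_refl l⟩
            have hmem : (⟨P', hP'irr⟩ : Spec A) ∈ beta d ∩ Z := ⟨hdP' (le_refl d), hPZ⟩
            rw [show beta d ∩ Z = ∅ from hd] at hmem
            exact hmem
          intro a ha b hb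
          obtain ⟨l₁, hl₁, hal⟩ := hcomp a ha
          obtain ⟨l₂, hl₂, hbl⟩ := hcomp b hb
          obtain ⟨l₃, hl₃, h13, h23⟩ := hLdir' l₁ hl₁ l₂ hl₂
          refine ⟨l₃, ?_, hal.trans h13, hbl.trans h23⟩
          show beta l₃ ∩ Z = ∅
          rw [Set.eq_empty_iff_forall_notMem]
          rintro x ⟨hx1, hx2⟩
          rw [hZeq] at hx2
          simp only [Set.mem_iInter, Set.mem_compl_iff] at hx2
          exact hx2 l₃ hl₃ hx1
      refine ⟨⋂ d ∈ IA Z, (beta (m d))ᶜ, ⟨m '' (IA Z), ?_, ?_⟩, ?_, ?_⟩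
      · rintro x ⟨a, ha, rfl⟩ y ⟨b, hb, rfl⟩
        obtain ⟨c, hc, hac, hbc⟩ := hIdir a ha b hb
        exact ⟨m c, ⟨c, hc, rfl⟩,
          Set.union_subset (beta_mono (hm _ _ hac)) (beta_mono (hm _ _ hbc))⟩
      · rw [Set.biInter_image]
      · -- Rm m P S
        show {a | m a ∈ P.1} ∩ IA (⋂ d ∈ IA Z, (beta (m d))ᶜ) = ∅
        rw [Set.eq_empty_iff_forall_notMem]
        rintro a ⟨haP, haS⟩
        obtain ⟨P', hP'irr, haP', hP'disj⟩ := sep (I := {x | ∃ d ∈ IA Z, x ≤ m d})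
          hA (isFilt_Ici a)
          (by
            rintro x ⟨d₁, hd₁, hx⟩ y ⟨d₂, hd₂, hy⟩
            obtain ⟨c, hc, h1c, h2c⟩ := hIdir d₁ hd₁ d₂ hd₂
            exact ⟨m c, ⟨c, hc, le_refl _⟩, hx.trans (hm _ _ h1c), hy.trans (hm _ _ h2c)⟩)
          (by obtain ⟨d, hd⟩ := hI; exact ⟨m d, d, hd, le_refl _⟩)
          (by
            rintro x hx ⟨d, hd, hxd⟩
            have hle : m a ≤ m d :=
              le_trans (hm _ _ (le_trans (Set.mem_Ici.mp hx) hxd)) (h d)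
            exact hR' d (P.2.1.1 hle haP) hd)
        have hP'S : (⟨P', hP'irr⟩ : Spec A) ∈ ⋂ d ∈ IA Z, (beta (m d))ᶜ := by
          refine Set.mem_iInter₂.mpr fun d hd hmd => ?_
          exact hP'disj (m d) hmd ⟨d, hd, le_refl _⟩
        have hmem : (⟨P', hP'irr⟩ : Spec A) ∈ beta a ∩ ⋂ d ∈ IA Z, (beta (m d))ᶜ :=
          ⟨haP' (le_refl a), hP'S⟩
        rw [show beta a ∩ ⋂ d ∈ IA Z, (beta (m d))ᶜ = ∅ from haS] at hmem
        exact hmem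
      · intro x hx
        show {b | m b ∈ x.1} ∩ IA Z = ∅
        rw [Set.eq_empty_iff_forall_notMem]
        rintro b ⟨hbx, hbI⟩
        simp only [Set.mem_iInter, Set.mem_compl_iff] at hx
        exact hx b hbI hbx
    · -- degenerate case: IA Z = ∅
      rw [Set.not_nonempty_iff_eq_empty] at hI
      refine ⟨Set.univ, ⟨∅, by simp, by simp⟩, ?_, ?_⟩
      · show {a | m a ∈ P.1} ∩ IA (Set.univ : Set (Spec A)) = ∅
        have hsub : IA (Set.univ : Set (Spec A)) ⊆ IA Z := by
          intro a ha
          show beta a ∩ Z = ∅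
          have h1 : beta a ∩ Set.univ = ∅ := ha
          rw [Set.inter_univ] at h1
          rw [h1]; exact Set.empty_inter Z
        rw [hI, Set.subset_empty_iff] at hsub
        rw [hsub, Set.inter_empty]
      · intro x _
        show {b | m b ∈ x.1} ∩ IA Z = ∅
        rw [hI, Set.inter_empty]
  · -- (⇐) weak density implies m² ≤ m
    intro hd a
    by_contra hle
    obtain ⟨P, hPirr, hmP, hPdisj⟩ := sep (I := Set.Iic (m a)) hA (isFilt_Ici (m (m a)))
      (fun x hx y hy => ⟨m a, le_refl _, hx, hy⟩) ⟨m a, le_refl _⟩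
      (fun x hx hxb => hle (le_trans (Set.mem_Ici.mp hx) (Set.mem_Iic.mp hxb)))
    have hmaP : m a ∉ P := fun hmem => hPdisj _ hmem (le_refl _)
    have hSBS : SBS ((beta a)ᶜ : Set (Spec A)) := by
      refine ⟨{a}, ?_, by simp⟩
      intro x hx y hy
      rw [Set.mem_singleton_iff] at hx hy
      exact ⟨a, rfl, by rw [hx, hy]; simp⟩
    have hRm : Rm m (⟨P, hPirr⟩ : Spec A) ((beta a)ᶜ) := by
      show {b | m b ∈ P} ∩ IA ((beta a)ᶜ : Set (Spec A)) = ∅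
      rw [Set.eq_empty_iff_forall_notMem]
      rintro b ⟨hbP, hbI⟩
      have hsub : beta b ⊆ beta a := by
        intro x hx
        by_contra hxa
        have hmem : x ∈ beta b ∩ (beta a)ᶜ := ⟨hx, hxa⟩
        rw [show beta b ∩ ((beta a)ᶜ : Set (Spec A)) = ∅ from hbI] at hmem
        exact hmem
      have hba : m b ≤ m a := hm _ _ (beta_reflect hA hsub)
      exact hmaP (hPirr.1.1 hba hbP)
    obtain ⟨S, hSsbs, hPS, hSZ⟩ := hd ⟨P, hPirr⟩ _ hSBS hRm
    have hmaIA : m a ∈ IA S := by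
      show beta (m a) ∩ S = ∅
      rw [Set.eq_empty_iff_forall_notMem]
      rintro x ⟨hx1, hx2⟩
      have hxZ := hSZ x hx2
      have haIA : a ∈ IA ((beta a)ᶜ : Set (Spec A)) := by
        show beta a ∩ (beta a)ᶜ = ∅
        exact Set.inter_compl_self _
      have hmem : a ∈ ({b | m b ∈ x.1} ∩ IA ((beta a)ᶜ : Set (Spec A))) := ⟨hx1, haIA⟩
      rw [show ({b | m b ∈ x.1} ∩ IA ((beta a)ᶜ : Set (Spec A))) = ∅ from hxZ] at hmem
      exact hmem
    have hmem : m a ∈ ({b | m b ∈ P} ∩ IA S) := ⟨hmP (le_refl _), hmaIA⟩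
    rw [show ({b | m b ∈ P} ∩ IA S) = ∅ from hPS] at hmem
    exact hmem
end
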